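/- Let T be a finite tree and let M be a minimal dominating set of T with |M| = Γ(T). Then |a_1(M)| = |N_1(M)|. -/

import Mathlib

open scoped Classical

variable {V : Type*} [Fintype V] [DecidableEq V]

/-- `S` is a dominating set of `G`: every vertex is in `S` or adjacent to a vertex of `S`. -/
def IsDomSet (G : SimpleGraph V) (S : Finset V) : Prop :=
  ∀ v : V, v ∈ S ∨ ∃ u ∈ S, G.Adj u v

/-- `S` is a minimal dominating set: it is dominating and no proper subset is dominating. -/
def MinimalDomSet (G : SimpleGraph V) (S : Finset V) : Prop :=
  IsDomSet G S ∧ ∀ T : Finset V, T ⊂ S → ¬ IsDomSet G T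

/-- `d_i(G)`: the number of dominating sets of `G` of cardinality `i`. -/
noncomputable def domCount (G : SimpleGraph V) (i : ℕ) : ℕ :=
  (Finset.univ.filter fun S : Finset V => IsDomSet G S ∧ S.card = i).card

/-- `a(S)`: the set of critical vertices of a dominating set `S`. -/
noncomputable def aSet (G : SimpleGraph V) (S : Finset V) : Finset V :=
  S.filter fun v => ¬ IsDomSet G (S.erase v)

/-- `a(G,i)`: the sum of `|a(S)|` over all dominating sets `S` of cardinality `i`. -/
noncomputable def aTotal (G : SimpleGraph V) (i : ℕ) : ℕ :=
  ∑ S ∈ Finset.univ.filter (fun S : Finset V => IsDomSet G S ∧ S.card = i), (aSet G S).card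

/-- `γ(G)`: the minimum cardinality of a dominating set. -/
noncomputable def gamma (G : SimpleGraph V) : ℕ :=
  sInf {k | ∃ S : Finset V, IsDomSet G S ∧ S.card = k}

/-- `Γ(G)`: the maximum cardinality of a minimal dominating set. -/
noncomputable def bigGamma (G : SimpleGraph V) : ℕ :=
  sSup {k | ∃ S : Finset V, MinimalDomSet G S ∧ S.card = k}

/-- The closed neighbourhood `N[v]` as a finset. -/
noncomputable def closedNbhd (G : SimpleGraph V) (v : V) : Finset V :=
  Finset.univ.filter fun u => u = v ∨ G.Adj v u

/-- `N_1(S)`: vertices outside `S` with exactly one closed neighbour in `S`. -/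
noncomputable def N1Set (G : SimpleGraph V) (S : Finset V) : Finset V :=
  Finset.univ.filter fun v => v ∉ S ∧ (closedNbhd G v ∩ S).card = 1

/-- `N_2(S)`: vertices outside `S` with at least two closed neighbours in `S`. -/
noncomputable def N2Set (G : SimpleGraph V) (S : Finset V) : Finset V :=
  Finset.univ.filter fun v => v ∉ S ∧ 2 ≤ (closedNbhd G v ∩ S).card

/-- `a_1(S)`: critical vertices whose closed neighbourhood meets `N_1(S)`. -/
noncomputable def a1Set (G : SimpleGraph V) (S : Finset V) : Finset V :=
  (aSet G S).filter fun v => (closedNbhd G v ∩ N1Set G S).Nonempty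

/-- `a_2(S)`: critical vertices whose closed neighbourhood misses `N_1(S)`. -/
noncomputable def a2Set (G : SimpleGraph V) (S : Finset V) : Finset V :=
  (aSet G S).filter fun v => closedNbhd G v ∩ N1Set G S = ∅

/-- In the tree `G` rooted at `r`, `x` is a descendant of `y`:
`y` lies on the unique path from `x` to the root `r`. -/
def Descendant (G : SimpleGraph V) (r x y : V) : Prop :=
  G.dist x r = G.dist x y + G.dist y r

/-- `x` is a child of `y` in `G` rooted at `r`. -/
def IsChild (G : SimpleGraph V) (r x y : V) : Prop :=
  Descendant G r x y ∧ G.dist y x = 1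

/-- `p` is the parent of `x` in `G` rooted at `r`. -/
def IsParent (G : SimpleGraph V) (r p x : V) : Prop :=
  IsChild G r x p

/-- `x` is a grandchild of `y` in `G` rooted at `r`. -/
def IsGrandchild (G : SimpleGraph V) (r x y : V) : Prop :=
  Descendant G r x y ∧ G.dist y x = 2

namespace A1N1Aux

open Finset SimpleGraph

set_option linter.unusedSectionVars false

variable {G : SimpleGraph V} {M : Finset V} {v : V}

/-! ### Basic closed-neighbourhood lemmas -/

lemma mem_closedNbhd {x w : V} : x ∈ closedNbhd G w ↔ x = w ∨ G.Adj w x := by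
  simp [closedNbhd]

lemma self_mem_closedNbhd (w : V) : w ∈ closedNbhd G w := by
  simp [mem_closedNbhd]

lemma closedNbhd_comm {x w : V} : x ∈ closedNbhd G w ↔ w ∈ closedNbhd G x := by
  simp only [mem_closedNbhd]
  constructor
  · rintro (rfl | h)
    · exact Or.inl rfl
    · exact Or.inr h.symm
  · rintro (rfl | h)
    · exact Or.inl rfl
    · exact Or.inr h.symm

lemma mem_N1 {q : V} : q ∈ N1Set G M ↔ q ∉ M ∧ (closedNbhd G q ∩ M).card = 1 := by
  simp [N1Set]

/-- In a minimal dominating set every vertex has a private neighbour. -/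
lemma exists_private (hM : MinimalDomSet G M) {m : V} (hm : m ∈ M) :
    ∃ p, closedNbhd G p ∩ M = {m} := by
  have hsub : M.erase m ⊂ M := Finset.erase_ssubset hm
  have hnd : ¬ IsDomSet G (M.erase m) := hM.2 _ hsub
  rw [IsDomSet] at hnd
  push_neg at hnd
  obtain ⟨p, hp1, hp2⟩ := hnd
  refine ⟨p, ?_⟩
  ext x
  simp only [Finset.mem_inter, mem_closedNbhd, Finset.mem_singleton]
  constructor
  · rintro ⟨hx1 | hx2, hxM⟩
    · subst hx1
      by_contra hne
      exact hp1 (Finset.mem_erase.mpr ⟨hne, hxM⟩)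
    · by_contra hne
      exact hp2 x (Finset.mem_erase.mpr ⟨hne, hxM⟩) hx2.symm
  · rintro rfl
    refine ⟨?_, hm⟩
    
    rcases hM.1 p with hpM | ⟨u, huM, hu⟩
    · left
      by_contra hne
      exact hp1 (Finset.mem_erase.mpr ⟨fun h => hne h.symm, hpM⟩)
    · right
      have : u = x := by
        by_contra hne
        exact hp2 u (Finset.mem_erase.mpr ⟨hne, huM⟩) hu
      subst this; exact hu.symm

/-- A dominating set all of whose vertices have privates is a minimal dominating set. -/
lemma minimal_of_privates (hdom : IsDomSet G M)
    (h : ∀ x ∈ M, ∃ p, closedNbhd G p ∩ M = {x}) : MinimalDomSet G M := by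
  refine ⟨hdom, fun T hT hTd => ?_⟩
  obtain ⟨x, hxM, hxT⟩ := Finset.exists_of_ssubset hT
  obtain ⟨p, hp⟩ := h x hxM
  have hxp : x ∈ closedNbhd G p := by
    have : x ∈ closedNbhd G p ∩ M := hp ▸ Finset.mem_singleton_self x
    exact (Finset.mem_inter.mp this).1
  rcases hTd p with hpT | ⟨u, huT, hu⟩
  · have : p ∈ closedNbhd G p ∩ M := Finset.mem_inter.mpr ⟨self_mem_closedNbhd p, hT.1 hpT⟩
    rw [hp, Finset.mem_singleton] at this
    exact hxT (this ▸ hpT)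
  · have : u ∈ closedNbhd G p ∩ M := by
      refine Finset.mem_inter.mpr ⟨?_, hT.1 huT⟩
      exact mem_closedNbhd.mpr (Or.inr hu.symm)
    rw [hp, Finset.mem_singleton] at this
    exact hxT (this ▸ huT)

/-! ### Tree lemmas -/

lemma tree_path_length (hT : G.IsTree) {a b : V} (p : G.Walk a b) (hp : p.IsPath) :
    p.length = G.dist a b := by
  obtain ⟨q, hq, hql⟩ := hT.isConnected.exists_path_of_dist a b
  have := (hT.existsUnique_path a b).unique hp hq
  rw [this, hql]

lemma dist_lt_of_mem_support {a b y : V} (p : G.Walk a b) (hy : y ∈ p.support)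
    (hne : y ≠ a) : G.dist y b < p.length ∨ (p.takeUntil y hy).length = 0 := by
  have h1 : G.dist y b ≤ (p.dropUntil y hy).length := SimpleGraph.dist_le _
  have h2 : (p.takeUntil y hy).length + (p.dropUntil y hy).length = p.length := by
    rw [← SimpleGraph.Walk.length_append, SimpleGraph.Walk.take_spec]
  by_cases h0 : (p.takeUntil y hy).length = 0
  · exact Or.inr h0
  · exact Or.inl (by omega)

lemma mem_support_dist_lt {a b y : V} (p : G.Walk a b) (hy : y ∈ p.support)
    (hne : y ≠ a) : G.dist y b + 1 ≤ p.length := by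
  rcases dist_lt_of_mem_support p hy hne with h | h
  · omega
  · exfalso
    exact hne (SimpleGraph.Walk.eq_of_length_eq_zero h).symm

/-- Neighbours in a tree have distances to `v` differing by exactly one. -/
lemma adj_dist_cases (hT : G.IsTree) {a b : V} (hab : G.Adj a b) (v : V) :
    G.dist a v = G.dist b v + 1 ∨ G.dist b v = G.dist a v + 1 := by
  have hconn := hT.isConnected
  have hd1 : G.dist a b = 1 := SimpleGraph.dist_eq_one_iff_adj.mpr hab
  have h1 : G.dist a v ≤ G.dist b v + 1 := by
    have := hconn.dist_triangle (u := a) (v := b) (w := v)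
    omega
  have h2 : G.dist b v ≤ G.dist a v + 1 := by
    have := hconn.dist_triangle (u := b) (v := a) (w := v)
    have hd2 : G.dist b a = 1 := SimpleGraph.dist_eq_one_iff_adj.mpr hab.symm
    omega
  have hne : G.dist a v ≠ G.dist b v := by
    intro heq
    obtain ⟨p, hp, hpl⟩ := hconn.exists_path_of_dist a v
    have hbs : b ∉ p.support := by
      intro hb
      have := mem_support_dist_lt p hb hab.ne'
      omega
    have hcons : (SimpleGraph.Walk.cons hab.symm p).IsPath := hp.cons hbs
    have := tree_path_length hT _ hcons
    simp only [SimpleGraph.Walk.length_cons] at this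
    omega
  omega

lemma parent_exists (hT : G.IsTree) {a v : V} (h : G.dist a v ≠ 0) :
    ∃ b, G.Adj a b ∧ G.dist a v = G.dist b v + 1 := by
  obtain ⟨p, hp, hpl⟩ := hT.isConnected.exists_path_of_dist a v
  cases p with
  | nil => exact absurd SimpleGraph.dist_self h
  | @cons _ b _ hadj q =>
    refine ⟨b, hadj, ?_⟩
    have h1 : G.dist b v ≤ q.length := SimpleGraph.dist_le _
    simp only [SimpleGraph.Walk.length_cons] at hpl
    rcases adj_dist_cases hT hadj v with hc | hc
    · omega
    · omega

lemma parent_unique (hT : G.IsTree) {a b b' v : V} (hab : G.Adj a b) (hab' : G.Adj a b')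
    (hb : G.dist a v = G.dist b v + 1) (hb' : G.dist a v = G.dist b' v + 1) : b = b' := by
  obtain ⟨p, hp, hpl⟩ := hT.isConnected.exists_path_of_dist b v
  obtain ⟨p', hp', hpl'⟩ := hT.isConnected.exists_path_of_dist b' v
  have has : a ∉ p.support := by
    intro ha
    have := mem_support_dist_lt p ha hab.ne
    omega
  have has' : a ∉ p'.support := by
    intro ha
    have := mem_support_dist_lt p' ha hab'.ne
    omega
  have h1 : (SimpleGraph.Walk.cons hab p).IsPath := hp.cons has
  have h2 : (SimpleGraph.Walk.cons hab' p').IsPath := hp'.cons has'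
  have := (hT.existsUnique_path a v).unique h1 h2
  have hsup := congrArg SimpleGraph.Walk.support this
  rw [SimpleGraph.Walk.support_cons, SimpleGraph.Walk.support_cons,
    p.support_eq_cons, p'.support_eq_cons] at hsup
  injection hsup with _ htail
  injection htail

lemma dist_lt_card (hT : G.IsTree) (a v : V) : G.dist a v < Fintype.card V := by
  obtain ⟨p, hp, hpl⟩ := hT.isConnected.exists_path_of_dist a v
  have := hp.length_lt
  omega

/-! ### The exchange construction -/

noncomputable def AOf (G : SimpleGraph V) (M S : Finset V) : Finset V :=
  (N1Set G M).filter fun q => ∃ r ∈ S, q ∈ closedNbhd G r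

noncomputable def BrokenOf (G : SimpleGraph V) (M S : Finset V) : Finset V :=
  (M \ S).filter fun m =>
    ∀ p, closedNbhd G p ∩ M = {m} → (closedNbhd G p ∩ AOf G M S).Nonempty

noncomputable def stR (G : SimpleGraph V) (M : Finset V) (v : V) : ℕ → Finset V
  | 0 => {v}
  | n + 1 => M.filter fun c => ∃ m ∈ BrokenOf G M (stR G M v n),
      G.Adj m c ∧ G.dist c v = G.dist m v + 1

def Inv (G : SimpleGraph V) (M : Finset V) (v : V) (n : ℕ) : Prop :=
  ∀ r ∈ stR G M v n, r ∈ M ∧ G.dist r v = 4 * n ∧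
    (r = v ∨ ∃ m ∈ M, G.Adj m r ∧ G.dist m v + 1 = G.dist r v)

noncomputable def RRSet (G : SimpleGraph V) (M : Finset V) (v : V) : Finset V :=
  (Finset.range (Fintype.card V + 1)).biUnion (stR G M v)

noncomputable def AASet (G : SimpleGraph V) (M : Finset V) (v : V) : Finset V :=
  (Finset.range (Fintype.card V + 1)).biUnion fun n => AOf G M (stR G M v n)

noncomputable def Mstar (G : SimpleGraph V) (M : Finset V) (v : V) : Finset V :=
  (M \ RRSet G M v) ∪ AASet G M v

lemma N1_dominator {q r : V} (hq : q ∈ N1Set G M) (hr : r ∈ closedNbhd G q ∩ M) :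
    closedNbhd G q ∩ M = {r} := by
  obtain ⟨a, ha⟩ := Finset.card_eq_one.mp (mem_N1.mp hq).2
  rw [ha] at hr ⊢
  rw [Finset.mem_singleton] at hr
  rw [hr]

lemma mem_RR {x : V} : x ∈ RRSet G M v ↔ ∃ n < Fintype.card V + 1, x ∈ stR G M v n := by
  simp [RRSet, Finset.mem_biUnion, Finset.mem_range]

lemma mem_AA {x : V} :
    x ∈ AASet G M v ↔ ∃ n < Fintype.card V + 1, x ∈ AOf G M (stR G M v n) := by
  simp [AASet, Finset.mem_biUnion, Finset.mem_range]

lemma AOf_subset_N1 {S : Finset V} {q : V} (h : q ∈ AOf G M S) : q ∈ N1Set G M :=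
  (Finset.mem_filter.mp h).1

lemma AA_not_mem_M {q : V} (h : q ∈ AASet G M v) : q ∉ M := by
  obtain ⟨n, _, hn⟩ := mem_AA.mp h
  exact (mem_N1.mp (AOf_subset_N1 hn)).1

/-- Stage analysis for added vertices. -/
lemma stage_A (hT : G.IsTree) {n : ℕ} (hinv : Inv G M v n) {q : V}
    (hq : q ∈ AOf G M (stR G M v n)) :
    q ∈ N1Set G M ∧ q ∉ M ∧ G.dist q v = 4 * n + 1 ∧
      ∃ r ∈ stR G M v n, closedNbhd G q ∩ M = {r} ∧ G.Adj r q := by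
  obtain ⟨hqN, r, hrS, hqr⟩ := Finset.mem_filter.mp hq
  obtain ⟨hrM, hrd, hrp⟩ := hinv r hrS
  have hqM : q ∉ M := (mem_N1.mp hqN).1
  have hne : q ≠ r := fun h => hqM (h ▸ hrM)
  have hadj : G.Adj r q := (mem_closedNbhd.mp hqr).resolve_left hne
  have hdom : closedNbhd G q ∩ M = {r} :=
    N1_dominator hqN (Finset.mem_inter.mpr ⟨closedNbhd_comm.mp hqr, hrM⟩)
  have hqd : G.dist q v = 4 * n + 1 := by
    rcases adj_dist_cases hT hadj v with h | h
    · exfalso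
      rcases hrp with heq | ⟨m, hmM, hma, hmd⟩
      · have hz : G.dist r v = 0 := by rw [heq]; exact SimpleGraph.dist_self
        omega
      · have : q = m := parent_unique hT hadj hma.symm h (by omega)
        exact hqM (this ▸ hmM)
    · omega
  exact ⟨hqN, hqM, hqd, r, hrS, hdom, hadj⟩

/-- Analysis of a killed private: locates the broken vertex at depth `4n+3`. -/
lemma killer_depth (hT : G.IsTree) {n : ℕ} (hinv : Inv G M v n) {m p q : V} (hm : m ∈ M)
    (hmR : m ∉ stR G M v n) (hp : closedNbhd G p ∩ M = {m})
    (hq : q ∈ closedNbhd G p ∩ AOf G M (stR G M v n)) :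
    G.dist m v = 4 * n + 3 ∧ p ∉ M ∧ G.Adj p m ∧ G.dist p v = 4 * n + 2 := by
  obtain ⟨hqp, hqA⟩ := Finset.mem_inter.mp hq
  obtain ⟨hqN, hqM, hqd, r, hrS, hdomq, hrq⟩ := stage_A hT hinv hqA
  have hrM : r ∈ M := (hinv r hrS).1
  have hrd : G.dist r v = 4 * n := (hinv r hrS).2.1
  have hqnep : q ≠ p := by
    rintro rfl
    have : m = r := Finset.singleton_inj.mp (hp ▸ hdomq)
    exact hmR (this ▸ hrS)
  have hpq : G.Adj p q := (mem_closedNbhd.mp hqp).resolve_left hqnep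
  have hpM : p ∉ M := by
    intro hpMem
    have hpm : p = m := by
      have : p ∈ closedNbhd G p ∩ M :=
        Finset.mem_inter.mpr ⟨self_mem_closedNbhd p, hpMem⟩
      rw [hp, Finset.mem_singleton] at this; exact this
    have : p ∈ closedNbhd G q ∩ M :=
      Finset.mem_inter.mpr ⟨mem_closedNbhd.mpr (Or.inr hpq.symm), hpMem⟩
    rw [hdomq, Finset.mem_singleton] at this
    exact hmR ((hpm.symm.trans this) ▸ hrS)
  have hpm_ne : p ≠ m := fun h => hpM (h ▸ hm)
  have hadjpm : G.Adj p m := by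
    have hmem : m ∈ closedNbhd G p := by
      have : m ∈ closedNbhd G p ∩ M := hp ▸ Finset.mem_singleton_self m
      exact (Finset.mem_inter.mp this).1
    rcases mem_closedNbhd.mp hmem with h | h
    · exact absurd h.symm hpm_ne
    · exact h
  have hdp : G.dist p v = 4 * n + 2 := by
    rcases adj_dist_cases hT hpq v with h | h
    · omega
    · exfalso
      have : p = r := parent_unique hT (v := v) hpq.symm hrq.symm (by omega) (by omega)
      exact hpM (this ▸ hrM)
  have hdm : G.dist m v = 4 * n + 3 := by
    rcases adj_dist_cases hT hadjpm v with h | h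
    · exfalso
      have : m = q := parent_unique hT (v := v) hadjpm hpq (by omega) (by omega)
      exact hqM (this ▸ hm)
    · omega
  exact ⟨hdm, hpM, hadjpm, hdp⟩

lemma stage_Broken (hT : G.IsTree) (hM : MinimalDomSet G M) {n : ℕ}
    (hinv : Inv G M v n) {m : V} (hm : m ∈ BrokenOf G M (stR G M v n)) :
    m ∈ M ∧ m ∉ stR G M v n ∧ G.dist m v = 4 * n + 3 := by
  obtain ⟨hms, hbr⟩ := Finset.mem_filter.mp hm
  obtain ⟨hmM, hmS⟩ := Finset.mem_sdiff.mp hms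
  obtain ⟨p, hp⟩ := exists_private hM hmM
  obtain ⟨q, hq⟩ := hbr p hp
  exact ⟨hmM, hmS, (killer_depth hT hinv hmM hmS hp hq).1⟩

lemma inv_all (hT : G.IsTree) (hM : MinimalDomSet G M) (hvM : v ∈ M) :
    ∀ n, Inv G M v n := by
  intro n
  induction n with
  | zero =>
    intro r hr
    simp only [stR, Finset.mem_singleton] at hr
    subst hr
    exact ⟨hvM, by simp [SimpleGraph.dist_self], Or.inl rfl⟩
  | succ n ih =>
    intro c hc
    simp only [stR, Finset.mem_filter] at hc
    obtain ⟨hcM, m, hmB, hma, hmd⟩ := hc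
    obtain ⟨hmM, _, hmdist⟩ := stage_Broken hT hM ih hmB
    exact ⟨hcM, by omega, Or.inr ⟨m, hmM, hma, by omega⟩⟩

lemma RR_subset_M (hT : G.IsTree) (hM : MinimalDomSet G M) (hvM : v ∈ M) :
    RRSet G M v ⊆ M := by
  intro x hx
  obtain ⟨n, _, hn⟩ := mem_RR.mp hx
  exact (inv_all hT hM hvM n x hn).1

/-- The modified set is dominating. -/
lemma Mstar_dom (hT : G.IsTree) (hM : MinimalDomSet G M) (hvM : v ∈ M) {u₁ : V}
    (hu₁ : u₁ ∈ closedNbhd G v ∩ N1Set G M) :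
    IsDomSet G (Mstar G M v) := by
  intro w
  by_cases hw : ∃ m ∈ M, m ∉ RRSet G M v ∧ m ∈ closedNbhd G w
  · obtain ⟨m, hmM, hmR, hmw⟩ := hw
    have hms : m ∈ Mstar G M v := Finset.mem_union_left _ (Finset.mem_sdiff.mpr ⟨hmM, hmR⟩)
    rcases mem_closedNbhd.mp hmw with rfl | hadj
    · exact Or.inl hms
    · exact Or.inr ⟨m, hms, hadj.symm⟩
  · push_neg at hw
    have hdomsub : ∀ m ∈ M, m ∈ closedNbhd G w → m ∈ RRSet G M v := by
      intro m h1 h2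
      by_contra h3; exact hw m h1 h3 h2
    by_cases hwM : w ∈ M
    · have hwR : w ∈ RRSet G M v := hdomsub w hwM (self_mem_closedNbhd w)
      obtain ⟨n, hn, hws⟩ := mem_RR.mp hwR
      obtain ⟨_, hwd, hrp⟩ := inv_all hT hM hvM n w hws
      rcases hrp with heq | ⟨m, hmM, hma, hmd⟩
      · obtain ⟨hu₁c, hu₁N⟩ := Finset.mem_inter.mp hu₁
        have hu₁M : u₁ ∉ M := (mem_N1.mp hu₁N).1
        have hu₁c' : u₁ ∈ closedNbhd G w := heq ▸ hu₁c
        have hadj : G.Adj w u₁ :=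
          (mem_closedNbhd.mp hu₁c').resolve_left (fun h => hu₁M (h ▸ hwM))
        have hv0 : v ∈ stR G M v 0 := by simp [stR]
        have hu1A : u₁ ∈ AASet G M v :=
          mem_AA.mpr ⟨0, by omega, Finset.mem_filter.mpr ⟨hu₁N, ⟨v, hv0, hu₁c⟩⟩⟩
        exact Or.inr ⟨u₁, Finset.mem_union_right _ hu1A, hadj.symm⟩
      · exfalso
        have hmw : m ∈ closedNbhd G w := mem_closedNbhd.mpr (Or.inr hma.symm)
        obtain ⟨j, hj, hmS⟩ := mem_RR.mp (hdomsub m hmM hmw)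
        have := (inv_all hT hM hvM j m hmS).2.1
        omega
    · rcases hM.1 w with h | ⟨m, hmM, hmadj⟩
      · exact absurd h hwM
      have hmw : m ∈ closedNbhd G w := mem_closedNbhd.mpr (Or.inr hmadj.symm)
      obtain ⟨n, hn, hmS⟩ := mem_RR.mp (hdomsub m hmM hmw)
      have key : ∀ m' ∈ M, m' ∈ closedNbhd G w → G.dist w v = G.dist m' v + 1 := by
        intro m' h1 h2
        obtain ⟨j, hj, hS⟩ := mem_RR.mp (hdomsub m' h1 h2)
        obtain ⟨hM', hd', hp'⟩ := inv_all hT hM hvM j m' hS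
        have hadj : G.Adj w m' :=
          (mem_closedNbhd.mp h2).resolve_left (fun h => hwM (h ▸ hM'))
        rcases adj_dist_cases hT hadj v with h | h
        · exact h
        · exfalso
          rcases hp' with heq | ⟨mm, hmmM, hmma, hmmd⟩
          · have hz : G.dist m' v = 0 := by rw [heq]; exact SimpleGraph.dist_self
            omega
          · have : mm = w := parent_unique hT (v := v) hmma.symm hadj.symm (by omega) (by omega)
            exact hwM (this ▸ hmmM)
      by_cases hcard : closedNbhd G w ∩ M = {m}
      · have hwN1 : w ∈ N1Set G M := mem_N1.mpr ⟨hwM, by rw [hcard]; simp⟩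
        have : w ∈ AOf G M (stR G M v n) :=
          Finset.mem_filter.mpr ⟨hwN1, m, hmS, closedNbhd_comm.mp hmw⟩
        exact Or.inl (Finset.mem_union_right _ (mem_AA.mpr ⟨n, hn, this⟩))
      · exfalso
        have hmmem : m ∈ closedNbhd G w ∩ M := Finset.mem_inter.mpr ⟨hmw, hmM⟩
        have hex : ∃ m' ∈ closedNbhd G w ∩ M, m' ≠ m := by
          by_contra hall; push_neg at hall
          exact hcard (Finset.eq_singleton_iff_unique_mem.mpr ⟨hmmem, hall⟩)
        obtain ⟨m', hm', hm'ne⟩ := hex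
        obtain ⟨h1', h2'⟩ := Finset.mem_inter.mp hm'
        have e1 := key m hmM hmw
        have e2 := key m' h2' h1'
        have hadj1 : G.Adj w m :=
          (mem_closedNbhd.mp hmw).resolve_left (fun h => hwM (h ▸ hmM))
        have hadj2 : G.Adj w m' :=
          (mem_closedNbhd.mp h1').resolve_left (fun h => hwM (h ▸ h2'))
        exact hm'ne (parent_unique hT hadj2 hadj1 e2 e1)

/-- Every vertex of the modified set has a private neighbour. -/
lemma Mstar_critical (hT : G.IsTree) (hM : MinimalDomSet G M) (hvM : v ∈ M) :
    ∀ x ∈ Mstar G M v, ∃ p, closedNbhd G p ∩ Mstar G M v = {x} := by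
  intro x hx
  rcases Finset.mem_union.mp hx with hxM | hxA
  case inr =>
    obtain ⟨n, hn, hA⟩ := mem_AA.mp hxA
    obtain ⟨hxN, hxnotM, hxd, r, hrS, hdom, hradj⟩ := stage_A hT (inv_all hT hM hvM n) hA
    refine ⟨x, Finset.eq_singleton_iff_unique_mem.mpr
      ⟨Finset.mem_inter.mpr ⟨self_mem_closedNbhd x, hx⟩, ?_⟩⟩
    intro y hy
    obtain ⟨hy1, hy2⟩ := Finset.mem_inter.mp hy
    rcases mem_closedNbhd.mp hy1 with h | hadjxy
    · exact h
    exfalso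
    rcases Finset.mem_union.mp hy2 with hyM | hyA
    · obtain ⟨hyMM, hyR⟩ := Finset.mem_sdiff.mp hyM
      have : y ∈ closedNbhd G x ∩ M :=
        Finset.mem_inter.mpr ⟨mem_closedNbhd.mpr (Or.inr hadjxy), hyMM⟩
      rw [hdom, Finset.mem_singleton] at this
      exact hyR (mem_RR.mpr ⟨n, hn, this ▸ hrS⟩)
    · obtain ⟨j, hj, hAj⟩ := mem_AA.mp hyA
      have hyd := (stage_A hT (inv_all hT hM hvM j) hAj).2.2.1
      rcases adj_dist_cases hT hadjxy v with h | h <;> omega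
  case inl =>
    obtain ⟨hxMM, hxR⟩ := Finset.mem_sdiff.mp hxM
    by_cases hsur : ∃ p, closedNbhd G p ∩ M = {x} ∧ closedNbhd G p ∩ AASet G M v = ∅
    · obtain ⟨p, hp1, hp2⟩ := hsur
      refine ⟨p, Finset.eq_singleton_iff_unique_mem.mpr ⟨?_, ?_⟩⟩
      · have : x ∈ closedNbhd G p ∩ M := hp1 ▸ Finset.mem_singleton_self x
        exact Finset.mem_inter.mpr ⟨(Finset.mem_inter.mp this).1, hx⟩
      · intro y hy
        obtain ⟨hy1, hy2⟩ := Finset.mem_inter.mp hy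
        rcases Finset.mem_union.mp hy2 with hyM | hyA
        · have : y ∈ closedNbhd G p ∩ M :=
            Finset.mem_inter.mpr ⟨hy1, (Finset.mem_sdiff.mp hyM).1⟩
          rw [hp1, Finset.mem_singleton] at this; exact this
        · exfalso
          have : y ∈ closedNbhd G p ∩ AASet G M v := Finset.mem_inter.mpr ⟨hy1, hyA⟩
          rw [hp2] at this
          exact absurd this (Finset.notMem_empty y)
    · push_neg at hsur
      obtain ⟨p₀, hp₀⟩ := exists_private hM hxMM
      obtain ⟨q₀, hq₀⟩ := hsur p₀ hp₀
      obtain ⟨hq₀p, hq₀A⟩ := Finset.mem_inter.mp hq₀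
      obtain ⟨n, hn, hq₀n⟩ := mem_AA.mp hq₀A
      have hxS : x ∉ stR G M v n := fun h => hxR (mem_RR.mpr ⟨n, hn, h⟩)
      obtain ⟨hxd, hp₀M, hp₀adj, hp₀d⟩ :=
        killer_depth hT (inv_all hT hM hvM n) hxMM hxS hp₀
          (Finset.mem_inter.mpr ⟨hq₀p, hq₀n⟩)
      have hxB : x ∈ BrokenOf G M (stR G M v n) := by
        rw [BrokenOf, Finset.mem_filter]
        refine ⟨Finset.mem_sdiff.mpr ⟨hxMM, hxS⟩, fun p hp => ?_⟩
        obtain ⟨q, hq⟩ := hsur p hp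
        obtain ⟨hqp, hqA⟩ := Finset.mem_inter.mp hq
        obtain ⟨j, hj, hqj⟩ := mem_AA.mp hqA
        have hxSj : x ∉ stR G M v j := fun h => hxR (mem_RR.mpr ⟨j, hj, h⟩)
        have h2 := killer_depth hT (inv_all hT hM hvM j) hxMM hxSj hp
          (Finset.mem_inter.mpr ⟨hqp, hqj⟩)
        have : j = n := by omega
        exact ⟨q, Finset.mem_inter.mpr ⟨hqp, this ▸ hqj⟩⟩
      refine ⟨x, Finset.eq_singleton_iff_unique_mem.mpr
        ⟨Finset.mem_inter.mpr ⟨self_mem_closedNbhd x, hx⟩, ?_⟩⟩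
      intro y hy
      obtain ⟨hy1, hy2⟩ := Finset.mem_inter.mp hy
      rcases mem_closedNbhd.mp hy1 with h | hadjxy
      · exact h
      exfalso
      rcases Finset.mem_union.mp hy2 with hyM | hyA
      · obtain ⟨hyMM, hyR⟩ := Finset.mem_sdiff.mp hyM
        rcases adj_dist_cases hT hadjxy v with h | h
        · have : y = p₀ := parent_unique hT hadjxy hp₀adj.symm h (by omega)
          exact hp₀M (this ▸ hyMM)
        · have hy' : y ∈ stR G M v (n + 1) := by
            simp only [stR, Finset.mem_filter]
            exact ⟨hyMM, x, hxB, hadjxy, by omega⟩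
          have hcard := dist_lt_card hT x v
          exact hyR (mem_RR.mpr ⟨n + 1, by omega, hy'⟩)
      · obtain ⟨j, hj, hAj⟩ := mem_AA.mp hyA
        have hyd := (stage_A hT (inv_all hT hM hvM j) hAj).2.2.1
        rcases adj_dist_cases hT hadjxy v with h | h <;> omega

/-! ### Size of the modified set -/

lemma priv_ne_exists (hT : G.IsTree) (hM : MinimalDomSet G M) (hvM : v ∈ M) {u₁ : V}
    (hu₁ : u₁ ∈ closedNbhd G v ∩ N1Set G M) {n : ℕ} {r : V} (hr : r ∈ stR G M v n) :
    ∃ p, closedNbhd G p ∩ M = {r} ∧ p ≠ r := by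
  obtain ⟨hrM, hrd, hrp⟩ := inv_all hT hM hvM n r hr
  rcases hrp with heq | ⟨m, hmM, hma, hmd⟩
  · subst heq
    obtain ⟨hu₁c, hu₁N⟩ := Finset.mem_inter.mp hu₁
    have hu₁M : u₁ ∉ M := (mem_N1.mp hu₁N).1
    refine ⟨u₁, N1_dominator hu₁N
      (Finset.mem_inter.mpr ⟨closedNbhd_comm.mp hu₁c, hrM⟩), fun h => hu₁M (h ▸ hrM)⟩
  · obtain ⟨p, hp⟩ := exists_private hM hrM
    refine ⟨p, hp, ?_⟩
    rintro rfl
    have : m ∈ closedNbhd G p ∩ M :=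
      Finset.mem_inter.mpr ⟨mem_closedNbhd.mpr (Or.inr hma.symm), hmM⟩
    rw [hp, Finset.mem_singleton] at this
    exact hma.ne (this ▸ rfl)

lemma AOf_card_ge (hT : G.IsTree) (hM : MinimalDomSet G M) (hvM : v ∈ M) {u₁ : V}
    (hu₁ : u₁ ∈ closedNbhd G v ∩ N1Set G M) (n : ℕ) :
    (stR G M v n).card ≤ (AOf G M (stR G M v n)).card := by
  classical
  set f : V → V := fun r =>
    if h : ∃ p, closedNbhd G p ∩ M = {r} ∧ p ≠ r then h.choose else r with hf
  have hspec : ∀ r ∈ stR G M v n,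
      closedNbhd G (f r) ∩ M = {r} ∧ f r ≠ r := by
    intro r hr
    have hex := priv_ne_exists hT hM hvM hu₁ hr
    simp only [hf, dif_pos hex]
    exact hex.choose_spec
  apply Finset.card_le_card_of_injOn f
  · intro r hr
    obtain ⟨h1, h2⟩ := hspec r hr
    have hpM : f r ∉ M := by
      intro hmem
      have : f r ∈ closedNbhd G (f r) ∩ M :=
        Finset.mem_inter.mpr ⟨self_mem_closedNbhd _, hmem⟩
      rw [h1, Finset.mem_singleton] at this
      exact h2 this
    have hrmem : r ∈ closedNbhd G (f r) := by
      have : r ∈ closedNbhd G (f r) ∩ M := h1 ▸ Finset.mem_singleton_self r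
      exact (Finset.mem_inter.mp this).1
    refine Finset.mem_filter.mpr ⟨mem_N1.mpr ⟨hpM, by rw [h1]; simp⟩,
      ⟨r, hr, closedNbhd_comm.mp hrmem⟩⟩
  · intro r hr r' hr' hfeq
    have h1 := (hspec r hr).1
    have h2 := (hspec r' hr').1
    rw [hfeq] at h1
    exact Finset.singleton_inj.mp (h1.symm.trans h2)

lemma AA_card_ge (hT : G.IsTree) (hM : MinimalDomSet G M) (hvM : v ∈ M) {u₁ u₂ : V}
    (hu₁ : u₁ ∈ closedNbhd G v ∩ N1Set G M) (hu₂ : u₂ ∈ closedNbhd G v ∩ N1Set G M)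
    (hne : u₁ ≠ u₂) : (RRSet G M v).card + 1 ≤ (AASet G M v).card := by
  have hA : (AASet G M v).card
      = ∑ n ∈ Finset.range (Fintype.card V + 1), (AOf G M (stR G M v n)).card := by
    apply Finset.card_biUnion
    intro n _ j _ hnj
    rw [Function.onFun, Finset.disjoint_left]
    intro q h1 h2
    have d1 := (stage_A hT (inv_all hT hM hvM n) h1).2.2.1
    have d2 := (stage_A hT (inv_all hT hM hvM j) h2).2.2.1
    omega
  have hR : (RRSet G M v).card
      ≤ ∑ n ∈ Finset.range (Fintype.card V + 1), (stR G M v n).card :=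
    Finset.card_biUnion_le
  have hstrict : ∑ n ∈ Finset.range (Fintype.card V + 1), (stR G M v n).card
      < ∑ n ∈ Finset.range (Fintype.card V + 1), (AOf G M (stR G M v n)).card := by
    apply Finset.sum_lt_sum
    · intro i _
      exact AOf_card_ge hT hM hvM hu₁ i
    · refine ⟨0, Finset.mem_range.mpr (by omega), ?_⟩
      have hv0 : v ∈ stR G M v 0 := by simp [stR]
      have hsub : ({u₁, u₂} : Finset V) ⊆ AOf G M (stR G M v 0) := by
        intro q hq
        have hq' : q = u₁ ∨ q = u₂ := by
          rcases Finset.mem_insert.mp hq with h | h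
          · exact Or.inl h
          · exact Or.inr (Finset.mem_singleton.mp h)
        rcases hq' with rfl | rfl
        · exact Finset.mem_filter.mpr ⟨(Finset.mem_inter.mp hu₁).2,
            ⟨v, hv0, (Finset.mem_inter.mp hu₁).1⟩⟩
        · exact Finset.mem_filter.mpr ⟨(Finset.mem_inter.mp hu₂).2,
            ⟨v, hv0, (Finset.mem_inter.mp hu₂).1⟩⟩
      have h2 : ({u₁, u₂} : Finset V).card = 2 := Finset.card_pair hne
      have h3 := Finset.card_le_card hsub
      have h4 : (stR G M v 0).card = 1 := by simp [stR]
      omega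
  omega

lemma Mstar_card (hT : G.IsTree) (hM : MinimalDomSet G M) (hvM : v ∈ M) {u₁ u₂ : V}
    (hu₁ : u₁ ∈ closedNbhd G v ∩ N1Set G M) (hu₂ : u₂ ∈ closedNbhd G v ∩ N1Set G M)
    (hne : u₁ ≠ u₂) : M.card + 1 ≤ (Mstar G M v).card := by
  have hdisj : Disjoint (M \ RRSet G M v) (AASet G M v) := by
    rw [Finset.disjoint_right]
    intro q hq
    intro hq2
    exact AA_not_mem_M hq ((Finset.mem_sdiff.mp hq2).1)
  have h1 : (Mstar G M v).card = (M \ RRSet G M v).card + (AASet G M v).card :=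
    Finset.card_union_of_disjoint hdisj
  have h2 : (M \ RRSet G M v).card = M.card - (RRSet G M v).card :=
    Finset.card_sdiff_of_subset (RR_subset_M hT hM hvM)
  have h3 := AA_card_ge hT hM hvM hu₁ hu₂ hne
  have h4 : (RRSet G M v).card ≤ M.card := Finset.card_le_card (RR_subset_M hT hM hvM)
  omega

/-- The key structural lemma: in a maximum minimal dominating set of a tree, no vertex
has two distinct external private neighbours. -/
lemma no_double_private (hT : G.IsTree) (hM : MinimalDomSet G M)
    (hmax : M.card = bigGamma G) {r u u' : V} (hrM : r ∈ M)
    (hu : u ∈ closedNbhd G r ∩ N1Set G M) (hu' : u' ∈ closedNbhd G r ∩ N1Set G M) :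
    u = u' := by
  by_contra hne
  have hdom := Mstar_dom hT hM hrM hu
  have hmin : MinimalDomSet G (Mstar G M r) :=
    minimal_of_privates hdom (Mstar_critical hT hM hrM)
  have hsz := Mstar_card hT hM hrM hu hu' hne
  have hmem : (Mstar G M r).card ∈ {k | ∃ S : Finset V, MinimalDomSet G S ∧ S.card = k} :=
    ⟨Mstar G M r, hmin, rfl⟩
  have hbdd : BddAbove {k | ∃ S : Finset V, MinimalDomSet G S ∧ S.card = k} := by
    refine ⟨Fintype.card V, fun k hk => ?_⟩
    obtain ⟨S, _, rfl⟩ := hk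
    simpa using Finset.card_le_univ S
  have hle : (Mstar G M r).card ≤ bigGamma G := le_csSup hbdd hmem
  omega

end A1N1Aux

theorem a1_card_eq_N1_card_of_maximum_minimal (G : SimpleGraph V) (hT : G.IsTree)
    (M : Finset V) (hM : MinimalDomSet G M) (hcard : M.card = bigGamma G) :
    (a1Set G M).card = (N1Set G M).card := by
  classical
  symm
  set f : V → V := fun u => if h : ∃ r, closedNbhd G u ∩ M = {r} then h.choose else u with hf
  have hspec : ∀ u ∈ N1Set G M, closedNbhd G u ∩ M = {f u} := by
    intro u hu
    have hex : ∃ r, closedNbhd G u ∩ M = {r} :=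
      Finset.card_eq_one.mp (A1N1Aux.mem_N1.mp hu).2
    simp only [hf, dif_pos hex]
    exact hex.choose_spec
  apply Finset.card_bij (fun u _ => f u)
  · intro u hu
    have hsing := hspec u hu
    have hfm : f u ∈ closedNbhd G u ∩ M := hsing ▸ Finset.mem_singleton_self _
    have hfM : f u ∈ M := (Finset.mem_inter.mp hfm).2
    have hfc : f u ∈ closedNbhd G u := (Finset.mem_inter.mp hfm).1
    refine Finset.mem_filter.mpr ⟨?_,
      ⟨u, Finset.mem_inter.mpr ⟨A1N1Aux.closedNbhd_comm.mp hfc, hu⟩⟩⟩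
    refine Finset.mem_filter.mpr ⟨hfM, ?_⟩
    intro hd
    have huM : u ∉ M := (A1N1Aux.mem_N1.mp hu).1
    rcases hd u with h1 | ⟨w, hw, hadj⟩
    · exact huM (Finset.mem_of_mem_erase h1)
    · have hwm : w ∈ closedNbhd G u ∩ M :=
        Finset.mem_inter.mpr ⟨A1N1Aux.mem_closedNbhd.mpr (Or.inr hadj.symm),
          Finset.mem_of_mem_erase hw⟩
      rw [hsing, Finset.mem_singleton] at hwm
      exact (Finset.mem_erase.mp hw).1 hwm
  · intro u hu u' hu' hfeq
    have h1 := hspec u hu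
    have h2 := hspec u' hu'
    have hfm : f u ∈ closedNbhd G u ∩ M := h1 ▸ Finset.mem_singleton_self _
    have hfM : f u ∈ M := (Finset.mem_inter.mp hfm).2
    have hmem1 : u ∈ closedNbhd G (f u) ∩ N1Set G M :=
      Finset.mem_inter.mpr ⟨A1N1Aux.closedNbhd_comm.mp (Finset.mem_inter.mp hfm).1, hu⟩
    have hx : f u' ∈ closedNbhd G u' ∩ M := h2 ▸ Finset.mem_singleton_self _
    have hmem2 : u' ∈ closedNbhd G (f u) ∩ N1Set G M := by
      have h3 : u' ∈ closedNbhd G (f u') :=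
        A1N1Aux.closedNbhd_comm.mp (Finset.mem_inter.mp hx).1
      rw [← hfeq] at h3
      exact Finset.mem_inter.mpr ⟨h3, hu'⟩
    exact A1N1Aux.no_double_private hT hM hcard hfM hmem1 hmem2
  · intro r hr
    obtain ⟨hra, hrn⟩ := Finset.mem_filter.mp hr
    obtain ⟨u, hu⟩ := hrn
    obtain ⟨hu1, hu2⟩ := Finset.mem_inter.mp hu
    refine ⟨u, hu2, ?_⟩
    have hsing := hspec u hu2
    have hrM : r ∈ M := (Finset.mem_filter.mp hra).1
    have hmem : r ∈ closedNbhd G u ∩ M :=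
      Finset.mem_inter.mpr ⟨A1N1Aux.closedNbhd_comm.mp hu1, hrM⟩
    rw [hsing, Finset.mem_singleton] at hmem
    exact hmem.symm
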